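/- Let A, B, C, D ∈ ℤ². There exists g ∈ G with g({A, B}) = {C, D} (image of the set {A,B} equals {C,D}) if and only if both of the following hold: (i) B − A = D − C or B − A = C − D, and (ii) either A is congruent to C modulo 2 and B is congruent to D modulo 2, or A is congruent to D modulo 2 and B is congruent to C modulo 2. -/

import Mathlib

/-- The point reflection `x ↦ 2p - x` of the plane `ℝ²` about an integer point `p`. -/
noncomputable def ptRefl (p : ℤ × ℤ) : Equiv.Perm (ℝ × ℝ) :=
  Equiv.pointReflection ((p.1 : ℝ), (p.2 : ℝ))

/-- The subgroup `G` of the group of bijections of `ℝ²` generated by the point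
reflections about integer points. -/
noncomputable def Ggrp : Subgroup (Equiv.Perm (ℝ × ℝ)) :=
  Subgroup.closure (Set.range ptRefl)

/-- Two integer points are congruent modulo 2 if their difference has both
coordinates even. -/
def congMod2 (P Q : ℤ × ℤ) : Prop := 2 ∣ P.1 - Q.1 ∧ 2 ∣ P.2 - Q.2

/-- The inclusion of `ℤ²` into `ℝ²`. -/
def intPt (P : ℤ × ℤ) : ℝ × ℝ := ((P.1 : ℝ), (P.2 : ℝ))

lemma intPt_add (P Q : ℤ × ℤ) : intPt (P + Q) = intPt P + intPt Q := by
  simp [intPt, Prod.ext_iff]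

lemma intPt_sub (P Q : ℤ × ℤ) : intPt (P - Q) = intPt P - intPt Q := by
  simp [intPt, Prod.ext_iff]

lemma intPt_inj {P Q : ℤ × ℤ} (h : intPt P = intPt Q) : P = Q := by
  have h1 := congrArg Prod.fst h
  have h2 := congrArg Prod.snd h
  simp only [intPt, Int.cast_inj] at h1 h2
  exact Prod.ext h1 h2

lemma ptRefl_apply (p : ℤ × ℤ) (x : ℝ × ℝ) : ptRefl p x = intPt (p + p) - x := by
  refine Prod.ext ?_ ?_ <;>
    simp [ptRefl, Equiv.pointReflection_apply, vsub_eq_sub, vadd_eq_add, intPt] <;> ring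

/-- Translations by even vectors are in `Ggrp`. -/
lemma exists_transl (v : ℤ × ℤ) (h1 : 2 ∣ v.1) (h2 : 2 ∣ v.2) :
    ∃ g ∈ Ggrp, ∀ x, g x = x + intPt v := by
  obtain ⟨a, ha⟩ := h1
  obtain ⟨b, hb⟩ := h2
  refine ⟨ptRefl (a, b) * ptRefl 0,
    mul_mem (Subgroup.subset_closure ⟨_, rfl⟩) (Subgroup.subset_closure ⟨_, rfl⟩), ?_⟩
  intro x
  have hv : v = (a, b) + (a, b) := by
    refine Prod.ext ?_ ?_ <;> simp <;> omega
  simp only [Equiv.Perm.mul_apply, ptRefl_apply, hv]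
  have h0 : intPt ((0 : ℤ × ℤ) + 0) = 0 := by simp [intPt, Prod.ext_iff]
  rw [h0]
  ring

/-- Point reflections about even points are in `Ggrp`. -/
lemma exists_refl (w : ℤ × ℤ) (h1 : 2 ∣ w.1) (h2 : 2 ∣ w.2) :
    ∃ g ∈ Ggrp, ∀ x, g x = intPt w - x := by
  obtain ⟨a, ha⟩ := h1
  obtain ⟨b, hb⟩ := h2
  refine ⟨ptRefl (a, b), Subgroup.subset_closure ⟨_, rfl⟩, ?_⟩
  intro x
  rw [ptRefl_apply]
  have hw : w = (a, b) + (a, b) := by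
    refine Prod.ext ?_ ?_ <;> simp <;> omega
  rw [hw]

/-- The subgroup of even translations and even point reflections. -/
noncomputable def Hgrp : Subgroup (Equiv.Perm (ℝ × ℝ)) where
  carrier := {g | (∃ v : ℤ × ℤ, 2 ∣ v.1 ∧ 2 ∣ v.2 ∧ ∀ x, g x = x + intPt v) ∨
                  (∃ w : ℤ × ℤ, 2 ∣ w.1 ∧ 2 ∣ w.2 ∧ ∀ x, g x = intPt w - x)}
  one_mem' := Or.inl ⟨0, by simp, by simp, by simp [intPt]⟩
  mul_mem' := by
    rintro g h (⟨v, hv1, hv2, hg⟩ | ⟨w, hw1, hw2, hg⟩) (⟨v', hv1', hv2', hh⟩ | ⟨w', hw1', hw2', hh⟩)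
    · refine Or.inl ⟨v + v', by simp; omega, by simp; omega, fun x => ?_⟩
      simp only [Equiv.Perm.mul_apply, hh, hg, intPt_add]; ring
    · refine Or.inr ⟨w' + v, by simp; omega, by simp; omega, fun x => ?_⟩
      simp only [Equiv.Perm.mul_apply, hh, hg, intPt_add]; ring
    · refine Or.inr ⟨w - v', by simp; omega, by simp; omega, fun x => ?_⟩
      simp only [Equiv.Perm.mul_apply, hh, hg, intPt_sub]; ring
    · refine Or.inl ⟨w - w', by simp; omega, by simp; omega, fun x => ?_⟩
      simp only [Equiv.Perm.mul_apply, hh, hg, intPt_sub]; ring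
  inv_mem' := by
    rintro g (⟨v, hv1, hv2, hg⟩ | ⟨w, hw1, hw2, hg⟩)
    · refine Or.inl ⟨-v, by simp; omega, by simp; omega, fun x => ?_⟩
      have := hg (g⁻¹ x)
      rw [show g (g⁻¹ x) = x from g.apply_symm_apply x] at this
      have hn : intPt (-v) = -intPt v := by simp [intPt, Prod.ext_iff]
      rw [hn]
      linear_combination -this
    · refine Or.inr ⟨w, hw1, hw2, fun x => ?_⟩
      have := hg (g⁻¹ x)
      rw [show g (g⁻¹ x) = x from g.apply_symm_apply x] at this
      linear_combination this

lemma Ggrp_le_Hgrp : Ggrp ≤ Hgrp := by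
  rw [Ggrp, Subgroup.closure_le]
  rintro _ ⟨p, rfl⟩
  exact Or.inr ⟨p + p, by simp; omega, by simp; omega, fun x => ptRefl_apply p x⟩

lemma intPt_eq_of (P Q : ℤ × ℤ) (h1 : P.1 = Q.1) (h2 : P.2 = Q.2) : intPt P = intPt Q :=
  congrArg intPt (Prod.ext h1 h2)

/-- For `A, B, C, D ∈ ℤ²`, there is `g ∈ G` with `g {A,B} = {C,D}` iff
(i) `B - A = D - C` or `B - A = C - D`, and (ii) `A ≡ C, B ≡ D (mod 2)` or
`A ≡ D, B ≡ C (mod 2)`. -/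
theorem stmt_9 (A B C D : ℤ × ℤ) :
    (∃ g ∈ Ggrp, (⇑g) '' {intPt A, intPt B} = {intPt C, intPt D}) ↔
      ((B - A = D - C ∨ B - A = C - D) ∧
        ((congMod2 A C ∧ congMod2 B D) ∨ (congMod2 A D ∧ congMod2 B C))) := by
  constructor
  · rintro ⟨g, hg, himg⟩
    rw [Set.image_pair, Set.pair_eq_pair_iff] at himg
    rcases Ggrp_le_Hgrp hg with ⟨v, hv1, hv2, hfor⟩ | ⟨w, hw1, hw2, hfor⟩
    · rcases himg with ⟨h1, h2⟩ | ⟨h1, h2⟩ <;>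
        rw [hfor, ← intPt_add] at h1 h2 <;>
        [have e1 := intPt_inj h1; have e1 := intPt_inj h1] <;>
        [have e2 := intPt_inj h2; have e2 := intPt_inj h2] <;>
        (simp only [Prod.ext_iff, Prod.fst_add, Prod.snd_add, Prod.fst_sub, Prod.snd_sub,
            congMod2] at e1 e2 ⊢; omega)
    · rcases himg with ⟨h1, h2⟩ | ⟨h1, h2⟩ <;>
        rw [hfor, ← intPt_sub] at h1 h2 <;>
        [have e1 := intPt_inj h1; have e1 := intPt_inj h1] <;>
        [have e2 := intPt_inj h2; have e2 := intPt_inj h2] <;>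
        (simp only [Prod.ext_iff, Prod.fst_add, Prod.snd_add, Prod.fst_sub, Prod.snd_sub,
            congMod2] at e1 e2 ⊢; omega)
  · rintro ⟨hi, hii⟩
    simp only [Prod.ext_iff, Prod.fst_sub, Prod.snd_sub] at hi
    rcases hii with ⟨⟨hAC1, hAC2⟩, ⟨hBD1, hBD2⟩⟩ | ⟨⟨hAD1, hAD2⟩, ⟨hBC1, hBC2⟩⟩ <;>
      rcases hi with ⟨hi1, hi2⟩ | ⟨hi1, hi2⟩
    · -- A ≡ C, B ≡ D, B - A = D - C : translation by C - A
      obtain ⟨g, hg, hfor⟩ := exists_transl (C - A) (by simp; omega) (by simp; omega)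
      refine ⟨g, hg, ?_⟩
      have hA : g (intPt A) = intPt C := by
        rw [hfor, ← intPt_add]; exact intPt_eq_of _ _ (by simp) (by simp)
      have hB : g (intPt B) = intPt D := by
        rw [hfor, ← intPt_add]; exact intPt_eq_of _ _ (by simp; omega) (by simp; omega)
      rw [Set.image_pair, hA, hB]
    · -- A ≡ C, B ≡ D, B - A = C - D : reflection about A + C
      obtain ⟨g, hg, hfor⟩ := exists_refl (A + C) (by simp; omega) (by simp; omega)
      refine ⟨g, hg, ?_⟩
      have hA : g (intPt A) = intPt C := by
        rw [hfor, ← intPt_sub]; exact intPt_eq_of _ _ (by simp) (by simp)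
      have hB : g (intPt B) = intPt D := by
        rw [hfor, ← intPt_sub]; exact intPt_eq_of _ _ (by simp; omega) (by simp; omega)
      rw [Set.image_pair, hA, hB]
    · -- A ≡ D, B ≡ C, B - A = D - C : reflection about A + D
      obtain ⟨g, hg, hfor⟩ := exists_refl (A + D) (by simp; omega) (by simp; omega)
      refine ⟨g, hg, ?_⟩
      have hA : g (intPt A) = intPt D := by
        rw [hfor, ← intPt_sub]; exact intPt_eq_of _ _ (by simp) (by simp)
      have hB : g (intPt B) = intPt C := by
        rw [hfor, ← intPt_sub]; exact intPt_eq_of _ _ (by simp; omega) (by simp; omega)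
      rw [Set.image_pair, hA, hB, Set.pair_comm]
    · -- A ≡ D, B ≡ C, B - A = C - D : translation by D - A
      obtain ⟨g, hg, hfor⟩ := exists_transl (D - A) (by simp; omega) (by simp; omega)
      refine ⟨g, hg, ?_⟩
      have hA : g (intPt A) = intPt D := by
        rw [hfor, ← intPt_add]; exact intPt_eq_of _ _ (by simp) (by simp)
      have hB : g (intPt B) = intPt C := by
        rw [hfor, ← intPt_add]; exact intPt_eq_of _ _ (by simp; omega) (by simp; omega)
      rw [Set.image_pair, hA, hB, Set.pair_comm]
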